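/- (Theorem 2(i), matrix form) Assume t ≠ 0, U ≠ 0, W > 0, and 4I < zW. Then the energy functional E(C) = −(1/2) Σ_{σ=1}^r Tr √((T + U·S_σ(C))²) + H_i^0(C) attains its minimum over all ion configurations at exactly two configurations: those in which every site of one sublattice (Λᵉ or Λᵒ) is occupied by all r ions (n_{x,σ} = 1 for all σ) while the complementary sublattice is empty. -/

import Mathlib

open Finset

/-- Occupation number (0 or 1) attached to a Boolean occupancy variable. -/
noncomputable def occ (b : Bool) : ℝ := if b then 1 else 0

/-- Total number of ions at site `x` (as a real number): `n_x = Σ_σ n_{x,σ}`. -/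
noncomputable def nsite {V : Type*} {r : ℕ} (C : V → Fin r → Bool) (x : V) : ℝ :=
  ∑ σ : Fin r, occ (C x σ)

/-- Total number of ions at site `x` (as a natural number). -/
def nnat {V : Type*} {r : ℕ} (C : V → Fin r → Bool) (x : V) : ℕ :=
  ∑ σ : Fin r, (if C x σ then 1 else 0)

/-- The classical Hamiltonian
`H_i^0(C) = 2I Σ_x Σ_{σ'<σ''} (n_{x,σ'} - 1/2)(n_{x,σ''} - 1/2)
          + (W/2) Σ_{⟨x,y⟩} (n_x - r/2)(n_y - r/2)`,
where the sum over edges `⟨x,y⟩` (each edge counted once) is written as half the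
symmetric double sum over ordered adjacent pairs. -/
noncomputable def H0 {V : Type*} [Fintype V] (G : SimpleGraph V) [DecidableRel G.Adj]
    (r : ℕ) (I W : ℝ) (C : V → Fin r → Bool) : ℝ :=
  2 * I * ∑ x : V, ∑ p ∈ Finset.univ.filter (fun p : Fin r × Fin r => p.1 < p.2),
      (occ (C x p.1) - 1 / 2) * (occ (C x p.2) - 1 / 2)
  + W / 2 * ((∑ x : V, ∑ y : V,
      (if G.Adj x y then (nsite C x - r / 2) * (nsite C y - r / 2) else 0)) / 2)

/-- Hopping matrix: `T_{xy} = t` if `{x,y}` is an edge of `G`, and `0` otherwise. -/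
noncomputable def hopMat {V : Type*} (G : SimpleGraph V) [DecidableRel G.Adj]
    (t : ℝ) : Matrix V V ℝ :=
  Matrix.of fun x y => if G.Adj x y then t else 0

/-- Diagonal matrix `S_σ(C)` with entries `(S_σ)_{xx} = 2 n_{x,σ} − 1`. -/
noncomputable def ionMat {V : Type*} [DecidableEq V] {r : ℕ}
    (C : V → Fin r → Bool) (σ : Fin r) : Matrix V V ℝ :=
  Matrix.diagonal fun x => 2 * occ (C x σ) - 1

/-- The positive semidefinite square root, as `Matrix.PosSemidef.sqrt` was defined in the
older Mathlib (that declaration has since been removed). -/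
noncomputable def psdSqrt {N : Type*} [Fintype N] [DecidableEq N] {A : Matrix N N ℝ}
    (hA : A.PosSemidef) : Matrix N N ℝ :=
  (hA.1.eigenvectorUnitary : Matrix N N ℝ) *
    Matrix.diagonal ((↑) ∘ (fun x : ℝ => √x) ∘ hA.1.eigenvalues) *
    (star hA.1.eigenvectorUnitary : Matrix N N ℝ)

/-- `Tr √(A²)`: the trace of the positive semidefinite square root of `A²`
(defined whenever `A²` is positive semidefinite, e.g. for symmetric `A`). -/
noncomputable def trAbs {N : Type*} [Fintype N] [DecidableEq N] (A : Matrix N N ℝ) : ℝ :=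
  letI := Classical.dec ((A * A).PosSemidef)
  if h : (A * A).PosSemidef then psdSqrt h |>.trace else 0

/-- The ground-state energy functional at the hole–particle symmetry point:
`E(C) = −(1/2) Σ_σ Tr √((T + U·S_σ(C))²) + H_i^0(C)`. -/
noncomputable def Efun {V : Type*} [Fintype V] [DecidableEq V] (G : SimpleGraph V)
    [DecidableRel G.Adj] (r : ℕ) (t U I W : ℝ) (C : V → Fin r → Bool) : ℝ :=
  -(1 / 2) * ∑ σ : Fin r, trAbs (hopMat G t + U • ionMat C σ) + H0 G r I W C

namespace Statement11Aux

set_option linter.unusedSectionVars false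

open Matrix

variable {N : Type*} [Fintype N] [DecidableEq N]

section
open scoped MatrixOrder
lemma psdSqrt_eq_cfc {A : Matrix N N ℝ} (hA : A.PosSemidef) : psdSqrt hA = CFC.sqrt A := by
  have h0 : (0:Matrix N N ℝ) ≤ A := Matrix.nonneg_iff_posSemidef.mpr hA
  rw [CFC.sqrt_eq_real_sqrt A, cfcₙ_eq_cfc, hA.1.cfc_eq]
  rfl
lemma posSemidef_psdSqrt {A : Matrix N N ℝ} (hA : A.PosSemidef) : (psdSqrt hA).PosSemidef := by
  rw [psdSqrt_eq_cfc, ← Matrix.nonneg_iff_posSemidef]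
  exact CFC.sqrt_nonneg A
lemma psdSqrt_mul_self {A : Matrix N N ℝ} (hA : A.PosSemidef) : psdSqrt hA * psdSqrt hA = A := by
  have h0 : (0:Matrix N N ℝ) ≤ A := Matrix.nonneg_iff_posSemidef.mpr hA
  rw [psdSqrt_eq_cfc]
  exact CFC.sqrt_mul_sqrt_self A
lemma eq_psdSqrt_of_sq_eq {B : Matrix N N ℝ} (hB : B.PosSemidef) {A : Matrix N N ℝ}
    (hA : A.PosSemidef) (h : B ^ 2 = A) : B = psdSqrt hA := by
  have h0 : (0:Matrix N N ℝ) ≤ B := Matrix.nonneg_iff_posSemidef.mpr hB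
  rw [psdSqrt_eq_cfc]
  exact (CFC.sqrt_unique (by rw [← h, sq])).symm
end

lemma trAbs_eq {A : Matrix N N ℝ} (h : (A*A).PosSemidef) : trAbs A = (psdSqrt h).trace := by
  unfold trAbs; rw [dif_pos h]

lemma trAbs_congr_sq {A B : Matrix N N ℝ} (h : A*A = B*B) : trAbs A = trAbs B := by
  unfold trAbs; rw [h]

lemma psd_of_herm {A : Matrix N N ℝ} (hA : A.IsHermitian) : (A*A).PosSemidef := by
  have := Matrix.posSemidef_conjTranspose_mul_self A
  rwa [hA.eq] at this

lemma star_mul_self_one (U : Matrix.unitaryGroup N ℝ) :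
    (star (U : Matrix N N ℝ)) * U = 1 :=
  Unitary.coe_star_mul_self U

lemma mul_star_self_one (U : Matrix.unitaryGroup N ℝ) :
    (U : Matrix N N ℝ) * (star (U : Matrix N N ℝ)) = 1 :=
  Unitary.coe_mul_star_self U

lemma trace_conj (U : Matrix.unitaryGroup N ℝ) (X : Matrix N N ℝ) :
    ((star (U : Matrix N N ℝ)) * X * U).trace = X.trace := by
  rw [Matrix.trace_mul_cycle, mul_star_self_one, Matrix.one_mul]

lemma conj_diag (Umat X : Matrix N N ℝ) (i : N) :
    ((star Umat) * X * Umat) i i = (fun x => Umat x i) ⬝ᵥ (X *ᵥ fun x => Umat x i) := by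
  simp only [Matrix.mul_apply, Matrix.star_apply, star_trivial, dotProduct, Matrix.mulVec,
    Finset.sum_mul, Finset.mul_sum]
  rw [Finset.sum_comm]
  apply Finset.sum_congr rfl; intro x _
  apply Finset.sum_congr rfl; intro y _
  ring

lemma trace_sqrt_eq_sum {M : Matrix N N ℝ} (hM : M.PosSemidef) :
    (psdSqrt hM).trace = ∑ i, Real.sqrt (hM.1.eigenvalues i) := by
  unfold psdSqrt
  rw [Matrix.trace_mul_cycle, star_mul_self_one, Matrix.one_mul, Matrix.trace_diagonal]
  simp

lemma sqrt_two_concave (a b : ℝ) (ha : 0 ≤ a) (hb : 0 ≤ b) :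
    Real.sqrt a + Real.sqrt b ≤ 2 * Real.sqrt ((a + b) / 2) := by
  have h1 : (Real.sqrt a + Real.sqrt b) ^ 2 ≤ (2 * Real.sqrt ((a + b) / 2)) ^ 2 := by
    have e1 := Real.sq_sqrt ha
    have e2 := Real.sq_sqrt hb
    have e3 := Real.sq_sqrt (by linarith : (0:ℝ) ≤ (a+b)/2)
    nlinarith [sq_nonneg (Real.sqrt a - Real.sqrt b)]
  have h2 : 0 ≤ 2 * Real.sqrt ((a + b) / 2) := by positivity
  nlinarith [Real.sqrt_nonneg a, Real.sqrt_nonneg b]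

lemma dot_self_mulVec {R : Matrix N N ℝ} (hR : R.IsHermitian) (v : N → ℝ) :
    (R *ᵥ v) ⬝ᵥ (R *ᵥ v) = v ⬝ᵥ ((R * R) *ᵥ v) := by
  rw [← Matrix.mulVec_mulVec]
  rw [Matrix.dotProduct_mulVec (R *ᵥ v), ← Matrix.mulVec_transpose]
  have hRT : Rᵀ = R := by
    have := hR.eq
    rwa [Matrix.conjTranspose_eq_transpose_of_trivial] at this
  rw [hRT, dotProduct_comm]

lemma dot_abs_le {A : Matrix N N ℝ} (hAA : (A*A).PosSemidef) (v : N → ℝ)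
    (hv : v ⬝ᵥ v = 1) :
    v ⬝ᵥ ((psdSqrt hAA) *ᵥ v) ≤ Real.sqrt (v ⬝ᵥ ((A*A) *ᵥ v)) := by
  set R := (psdSqrt hAA) with hRdef
  have hRpsd : R.PosSemidef := posSemidef_psdSqrt hAA
  have hq0 : 0 ≤ v ⬝ᵥ (R *ᵥ v) := by simpa using hRpsd.dotProduct_mulVec_nonneg v
  have hRR : R * R = A * A := psdSqrt_mul_self hAA
  have cs : (v ⬝ᵥ (R *ᵥ v))^2 ≤ (v ⬝ᵥ v) * ((R *ᵥ v) ⬝ᵥ (R *ᵥ v)) := by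
    have := Finset.sum_mul_sq_le_sq_mul_sq Finset.univ v (R *ᵥ v)
    simpa [dotProduct, sq] using this
  rw [hv, one_mul, dot_self_mulVec hRpsd.1, hRR] at cs
  calc v ⬝ᵥ (R *ᵥ v) = Real.sqrt ((v ⬝ᵥ (R *ᵥ v))^2) := (Real.sqrt_sq hq0).symm
    _ ≤ Real.sqrt (v ⬝ᵥ ((A*A) *ᵥ v)) := Real.sqrt_le_sqrt cs

lemma trace_eq_sum_dot (U : Matrix.unitaryGroup N ℝ) (X : Matrix N N ℝ) :
    X.trace = ∑ i, (fun x => (U:Matrix N N ℝ) x i) ⬝ᵥ (X *ᵥ fun x => (U:Matrix N N ℝ) x i) := by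
  rw [← trace_conj U X]
  rw [Matrix.trace]
  exact Finset.sum_congr rfl fun i _ => conj_diag _ X i

lemma key {A B C0 : Matrix N N ℝ} (hA : A.IsHermitian) (hB : B.IsHermitian)
    (hC : C0.IsHermitian) (hsum : A * A + B * B = (2:ℝ) • (C0 * C0)) :
    trAbs A + trAbs B ≤ 2 * trAbs C0 := by
  have hAA : (A*A).PosSemidef := psd_of_herm hA
  have hBB : (B*B).PosSemidef := psd_of_herm hB
  have hM : (C0*C0).PosSemidef := psd_of_herm hC
  set U := hM.1.eigenvectorUnitary with hU
  set lam := hM.1.eigenvalues with hlam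
  have hdiag : (star (U:Matrix N N ℝ)) * (C0*C0) * (U:Matrix N N ℝ)
      = Matrix.diagonal (RCLike.ofReal ∘ lam) := by
    have hs := hM.1.spectral_theorem
    rw [Unitary.conjStarAlgAut_apply, ← hU, ← hlam] at hs
    rw [hs]
    simp only [← mul_assoc, Unitary.coe_star_mul_self, one_mul]
    rw [mul_assoc, Unitary.coe_star_mul_self, mul_one]
  have main : ∀ i, (fun x => (U:Matrix N N ℝ) x i) ⬝ᵥ ((psdSqrt hAA) *ᵥ (fun x => (U:Matrix N N ℝ) x i))
      + (fun x => (U:Matrix N N ℝ) x i) ⬝ᵥ ((psdSqrt hBB) *ᵥ (fun x => (U:Matrix N N ℝ) x i))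
      ≤ 2 * Real.sqrt (lam i) := by
    intro i
    set v := (fun x => (U:Matrix N N ℝ) x i) with hv
    have hv1 : v ⬝ᵥ v = 1 := by
      have h1 := conj_diag (U:Matrix N N ℝ) 1 i
      rw [Matrix.mul_one, star_mul_self_one, Matrix.one_mulVec] at h1
      rw [← h1, Matrix.one_apply_eq]
    have hlami : lam i = v ⬝ᵥ ((C0*C0) *ᵥ v) := by
      have h2 := congrFun (congrFun hdiag i) i
      rw [conj_diag] at h2
      rw [Matrix.diagonal_apply_eq] at h2
      simpa using h2.symm
    have ha0 : 0 ≤ v ⬝ᵥ ((A*A) *ᵥ v) := by simpa using hAA.dotProduct_mulVec_nonneg v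
    have hb0 : 0 ≤ v ⬝ᵥ ((B*B) *ᵥ v) := by simpa using hBB.dotProduct_mulVec_nonneg v
    have hab : v ⬝ᵥ ((A*A) *ᵥ v) + v ⬝ᵥ ((B*B) *ᵥ v) = 2 * (lam i) := by
      have h3 : (A*A) *ᵥ v + (B*B) *ᵥ v = (2:ℝ) • ((C0*C0) *ᵥ v) := by
        rw [← Matrix.add_mulVec, hsum, Matrix.smul_mulVec]
      have h4 := congrArg (fun w => v ⬝ᵥ w) h3
      simpa [dotProduct_add, dotProduct_smul, hlami] using h4
    calc v ⬝ᵥ ((psdSqrt hAA) *ᵥ v) + v ⬝ᵥ ((psdSqrt hBB) *ᵥ v)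
        ≤ Real.sqrt (v ⬝ᵥ ((A*A) *ᵥ v)) + Real.sqrt (v ⬝ᵥ ((B*B) *ᵥ v)) :=
          add_le_add (dot_abs_le hAA v hv1) (dot_abs_le hBB v hv1)
      _ ≤ 2 * Real.sqrt ((v ⬝ᵥ ((A*A) *ᵥ v) + v ⬝ᵥ ((B*B) *ᵥ v)) / 2) :=
          sqrt_two_concave _ _ ha0 hb0
      _ = 2 * Real.sqrt (lam i) := by rw [hab]; congr 1; ring_nf
  rw [trAbs_eq hAA, trAbs_eq hBB, trAbs_eq hM, trace_sqrt_eq_sum hM,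
    trace_eq_sum_dot U (psdSqrt hAA), trace_eq_sum_dot U (psdSqrt hBB)]
  rw [← Finset.sum_add_distrib, Finset.mul_sum]
  exact Finset.sum_le_sum fun i _ => main i

lemma trAbs_conj {A : Matrix N N ℝ} (hAA : (A*A).PosSemidef) (d : N → ℝ)
    (hd : ∀ x, d x * d x = 1) :
    trAbs (Matrix.diagonal d * A * Matrix.diagonal d) = trAbs A := by
  set D := Matrix.diagonal d with hDdef
  have hDD : D * D = 1 := by
    rw [hDdef, Matrix.diagonal_mul_diagonal]
    have h1 : (fun i => d i * d i) = fun _ => (1:ℝ) := funext hd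
    rw [h1, Matrix.diagonal_one]
  have hDH : Dᴴ = D := by
    rw [hDdef, Matrix.diagonal_conjTranspose]
    congr 1
  have reassoc : ∀ X Y : Matrix N N ℝ, (D*X*D)*(D*Y*D) = D*(X*Y)*D := by
    intro X Y
    have h2 : (D*X*D)*(D*Y*D) = D*X*(D*D)*Y*D := by noncomm_ring
    rw [h2, hDD, Matrix.mul_one]
    noncomm_ring
  have hsq : (D*A*D)*(D*A*D) = D*(A*A)*D := reassoc A A
  have hpsd2 : ((D*A*D)*(D*A*D)).PosSemidef := by
    rw [hsq]
    have := hAA.mul_mul_conjTranspose_same D; rwa [hDH] at this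
  rw [trAbs_eq hpsd2, trAbs_eq hAA]
  have hRpsd : (D * (psdSqrt hAA) * D).PosSemidef := by
    have := (posSemidef_psdSqrt hAA).mul_mul_conjTranspose_same D; rwa [hDH] at this
  have hsq2 : (D * (psdSqrt hAA) * D)^2 = (D*A*D)*(D*A*D) := by
    rw [hsq, pow_two, reassoc, psdSqrt_mul_self hAA]
  have hkey := eq_psdSqrt_of_sq_eq hRpsd hpsd2 hsq2
  rw [← hkey, Matrix.trace_mul_cycle, hDD, Matrix.one_mul]

lemma sq_expand (X D : Matrix N N ℝ) (hDD : D * D = 1) (u : ℝ) :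
    (X + u • D) * (X + u • D) = X*X + u • (X*D + D*X) + (u*u) • (1:Matrix N N ℝ) := by
  simp only [Matrix.add_mul, Matrix.mul_add, smul_mul_assoc, mul_smul_comm, smul_smul,
    smul_add, hDD]
  abel

lemma sum_sq_eq (T Ds De : Matrix N N ℝ) (U : ℝ) (hss : Ds*Ds = 1) (hee : De*De = 1)
    (hanti : T*De + De*T = 0) :
    (T + U•Ds)*(T + U•Ds) + (-T + U•Ds)*(-T + U•Ds) = (2:ℝ)•((T + U•De)*(T + U•De)) := by
  have h1 := sq_expand T Ds hss U
  have h2 := sq_expand (-T) Ds hss U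
  have h3 := sq_expand T De hee U
  simp only [neg_mul, mul_neg, neg_neg] at h2
  rw [h1]
  rw [show -T + U•Ds = (-T) + U•Ds from rfl, h2, h3, hanti, smul_zero, add_zero]
  module

lemma conj_eps_T (T : Matrix N N ℝ) (eps : N → ℝ) (h : ∀ x y, eps x * T x y * eps y = - T x y) :
    Matrix.diagonal eps * T * Matrix.diagonal eps = -T := by
  ext x y
  rw [Matrix.mul_diagonal, Matrix.diagonal_mul]
  rw [Matrix.neg_apply, ← h x y]

lemma conj_eps_diag (d s : N → ℝ) (hd2 : ∀ x, d x * d x = 1) :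
    Matrix.diagonal d * Matrix.diagonal s * Matrix.diagonal d = Matrix.diagonal s := by
  rw [Matrix.diagonal_mul_diagonal, Matrix.diagonal_mul_diagonal]
  have h1 : (fun i => d i * s i * d i) = s := funext fun x => by linear_combination s x * hd2 x
  rw [h1]

lemma anticomm_T (T : Matrix N N ℝ) (eps : N → ℝ) (h : ∀ x y, T x y * (eps x + eps y) = 0) :
    T * Matrix.diagonal eps + Matrix.diagonal eps * T = 0 := by
  ext x y
  rw [Matrix.add_apply, Matrix.mul_diagonal, Matrix.diagonal_mul, Matrix.zero_apply]
  have := h x y; ring_nf; ring_nf at this; linarith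

lemma diag_sq_one (d : N → ℝ) (hd2 : ∀ x, d x * d x = 1) :
    Matrix.diagonal d * Matrix.diagonal d = 1 := by
  rw [Matrix.diagonal_mul_diagonal]
  have h1 : (fun i => d i * d i) = fun _ => (1:ℝ) := funext hd2
  rw [h1, Matrix.diagonal_one]

lemma sum_lt_pairs {r : ℕ} (f : Fin r → ℝ) :
    ∑ p ∈ Finset.univ.filter (fun p : Fin r × Fin r => p.1 < p.2), f p.1 * f p.2
      = ((∑ i, f i)^2 - ∑ i, (f i)^2) / 2 := by
  have hsq : (∑ i, f i)^2 = ∑ p : Fin r × Fin r, f p.1 * f p.2 := by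
    rw [sq, Finset.sum_mul_sum, ← Fintype.sum_prod_type']
  have hsplit := Finset.sum_filter_add_sum_filter_not Finset.univ
      (fun p : Fin r × Fin r => p.1 < p.2) (fun p => f p.1 * f p.2)
  have hsplit2 := Finset.sum_filter_add_sum_filter_not
      (Finset.univ.filter (fun p : Fin r × Fin r => ¬ p.1 < p.2))
      (fun p : Fin r × Fin r => p.2 < p.1) (fun p => f p.1 * f p.2)
  have e1 : (Finset.univ.filter (fun p : Fin r × Fin r => ¬ p.1 < p.2)).filter
        (fun p : Fin r × Fin r => p.2 < p.1)
      = Finset.univ.filter (fun p : Fin r × Fin r => p.2 < p.1) := by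
    rw [Finset.filter_filter]
    exact Finset.filter_congr fun p _ => ⟨fun h => h.2, fun h => ⟨lt_asymm h, h⟩⟩
  have e2 : (Finset.univ.filter (fun p : Fin r × Fin r => ¬ p.1 < p.2)).filter
        (fun p : Fin r × Fin r => ¬ p.2 < p.1)
      = Finset.univ.filter (fun p : Fin r × Fin r => p.1 = p.2) := by
    rw [Finset.filter_filter]
    refine Finset.filter_congr fun p _ => ⟨fun h => le_antisymm (not_lt.mp h.2) (not_lt.mp h.1),
      fun h => ⟨by simp [h], by simp [h]⟩⟩
  have e3 : ∑ p ∈ Finset.univ.filter (fun p : Fin r × Fin r => p.2 < p.1), f p.1 * f p.2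
      = ∑ p ∈ Finset.univ.filter (fun p : Fin r × Fin r => p.1 < p.2), f p.1 * f p.2 := by
    refine Finset.sum_equiv (Equiv.prodComm (Fin r) (Fin r)) (fun p => by simp) ?_
    intro p _
    simp [Equiv.prodComm, mul_comm]
  have e4 : ∑ p ∈ Finset.univ.filter (fun p : Fin r × Fin r => p.1 = p.2), f p.1 * f p.2
      = ∑ i, (f i)^2 := by
    rw [Finset.sum_filter, Fintype.sum_prod_type]
    simp [sq]
  rw [e1, e2, e3, e4] at hsplit2
  rw [← hsplit2] at hsplit
  rw [← hsq] at hsplit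
  linarith

lemma site_term {r : ℕ} (g : Fin r → Bool) :
    ∑ p ∈ Finset.univ.filter (fun p : Fin r × Fin r => p.1 < p.2),
        (occ (g p.1) - 1/2) * (occ (g p.2) - 1/2)
      = (((∑ σ, occ (g σ)) - r/2)^2 - r/4)/2 := by
  rw [sum_lt_pairs (fun σ => occ (g σ) - 1/2)]
  have h1 : ∑ σ : Fin r, (occ (g σ) - 1/2) = (∑ σ, occ (g σ)) - r/2 := by
    rw [Finset.sum_sub_distrib, Finset.sum_const, Finset.card_univ, Fintype.card_fin,
      nsmul_eq_mul]
    ring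
  have h2 : ∑ σ : Fin r, (occ (g σ) - 1/2)^2 = (r/4 : ℝ) := by
    have h3 : ∀ σ : Fin r, (occ (g σ) - 1/2)^2 = (1/4 : ℝ) := by
      intro σ; cases h : g σ <;> simp [occ, h] <;> norm_num
    rw [Finset.sum_congr rfl fun σ _ => h3 σ, Finset.sum_const, Finset.card_univ,
      Fintype.card_fin, nsmul_eq_mul]
    ring
  rw [h1, h2]

lemma occ_nonneg (b : Bool) : 0 ≤ occ b := by cases b <;> simp [occ]
lemma occ_le_one (b : Bool) : occ b ≤ 1 := by cases b <;> simp [occ]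

lemma nsite_nonneg {V : Type*} {r : ℕ} (C : V → Fin r → Bool) (x : V) : 0 ≤ nsite C x :=
  Finset.sum_nonneg fun σ _ => occ_nonneg _

lemma nsite_le {V : Type*} {r : ℕ} (C : V → Fin r → Bool) (x : V) : nsite C x ≤ r := by
  calc nsite C x ≤ ∑ _σ : Fin r, (1:ℝ) := Finset.sum_le_sum fun σ _ => occ_le_one _
    _ = r := by simp

lemma all_true_of_nsite_eq {V : Type*} {r : ℕ} (C : V → Fin r → Bool) (x : V)
    (h : nsite C x = r) : ∀ σ, C x σ = true := by
  by_contra hc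
  push_neg at hc
  obtain ⟨σ0, hσ0⟩ := hc
  have h0 : occ (C x σ0) = 0 := by
    cases hh : C x σ0
    · simp [occ]
    · exact absurd hh hσ0
  have hlt : nsite C x < ∑ _σ : Fin r, (1:ℝ) := by
    apply Finset.sum_lt_sum (fun σ _ => occ_le_one _)
    exact ⟨σ0, Finset.mem_univ _, by rw [h0]; norm_num⟩
  rw [h] at hlt
  simp at hlt

lemma all_false_of_nsite_eq {V : Type*} {r : ℕ} (C : V → Fin r → Bool) (x : V)
    (h : nsite C x = 0) : ∀ σ, C x σ = false := by
  intro σ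
  have h1 := (Finset.sum_eq_zero_iff_of_nonneg (fun σ _ => occ_nonneg (C x σ))).mp h σ
    (Finset.mem_univ _)
  cases hh : C x σ
  · rfl
  · rw [hh] at h1; simp [occ] at h1

lemma walk_const {V : Type*} (G : SimpleGraph V) (u : V → ℝ)
    (h : ∀ x y, G.Adj x y → u x = u y) {x y : V} (w : G.Walk x y) : u x = u y := by
  induction w with
  | nil => rfl
  | cons h' p ih => exact (h _ _ h').trans ih

lemma H0_eq {V : Type*} [Fintype V] (G : SimpleGraph V) [DecidableRel G.Adj]
    (z r : ℕ) (hreg : G.IsRegularOfDegree z)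
    (eps : V → ℝ) (heps2 : ∀ x, eps x * eps x = 1)
    (hepsadj : ∀ x y, G.Adj x y → eps x * eps y = -1)
    (I W : ℝ) (C : V → Fin r → Bool) :
    H0 G r I W C
      = (I - z*W/4) * (∑ x, (eps x * (nsite C x - r/2))^2)
        + W/8 * (∑ x, ∑ y, if G.Adj x y
            then (eps x * (nsite C x - r/2) - eps y * (nsite C y - r/2))^2 else 0)
        - I * r * (Fintype.card V) / 4 := by
  set m : V → ℝ := fun x => nsite C x - (r:ℝ)/2 with hm
  set u : V → ℝ := fun x => eps x * m x with hu
  have hu2 : ∀ x, (u x)^2 = (m x)^2 := fun x => by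
    simp only [hu]
    linear_combination (m x)^2 * heps2 x
  have deg : ∀ x, ∑ y, (if G.Adj x y then (1:ℝ) else 0) = z := by
    intro x
    rw [Finset.sum_boole]
    congr 1
    rw [← SimpleGraph.neighborFinset_eq_filter]
    exact_mod_cast hreg x
  have inner1 : ∀ (x : V) (c : ℝ), ∑ y, (if G.Adj x y then c else 0) = z * c := by
    intro x c
    have h1 : ∑ y, (if G.Adj x y then c else 0)
        = (∑ y, (if G.Adj x y then (1:ℝ) else 0)) * c := by
      rw [Finset.sum_mul]
      exact Finset.sum_congr rfl fun y _ => by by_cases h : G.Adj x y <;> simp [h]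
    rw [h1, deg x]
  have hP1 : ∑ x, ∑ y, (if G.Adj x y then (u x)^2 else 0) = z * ∑ x, (u x)^2 := by
    rw [Finset.mul_sum]
    exact Finset.sum_congr rfl fun x _ => inner1 x _
  have hP2 : ∑ x, ∑ y, (if G.Adj x y then (u y)^2 else 0) = z * ∑ x, (u x)^2 := by
    rw [Finset.sum_comm, Finset.mul_sum]
    refine Finset.sum_congr rfl fun y _ => ?_
    have hc : ∀ x, (if G.Adj x y then (u y)^2 else 0) = (if G.Adj y x then (u y)^2 else 0) :=
      fun x => if_congr (G.adj_comm x y) rfl rfl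
    rw [Finset.sum_congr rfl fun x _ => hc x, inner1 y _]
  have edge : ∀ x y, (if G.Adj x y then m x * m y else 0)
      = (if G.Adj x y then (u x - u y)^2 else 0)/2
        - (if G.Adj x y then (u x)^2 else 0)/2 - (if G.Adj x y then (u y)^2 else 0)/2 := by
    intro x y
    by_cases h : G.Adj x y
    · simp only [if_pos h, hu]
      linear_combination (m x * m y) * hepsadj x y h
    · simp [h]
  have hQ : ∑ x, ∑ y, (if G.Adj x y then m x * m y else 0)
      = (∑ x, ∑ y, (if G.Adj x y then (u x - u y)^2 else 0))/2 - z * ∑ x, (u x)^2 := by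
    rw [Finset.sum_congr rfl fun x _ => Finset.sum_congr rfl fun y _ => edge x y]
    simp only [Finset.sum_sub_distrib, ← Finset.sum_div]
    rw [hP1, hP2]
    ring
  have hfirst : ∑ x : V, ∑ p ∈ Finset.univ.filter (fun p : Fin r × Fin r => p.1 < p.2),
        (occ (C x p.1) - 1 / 2) * (occ (C x p.2) - 1 / 2)
      = ((∑ x, (u x)^2) - (Fintype.card V) * (r/4))/2 := by
    rw [Finset.sum_congr rfl fun x _ => site_term (C x)]
    have hns : ∀ x, (∑ σ, occ (C x σ)) = nsite C x := fun x => rfl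
    simp only [hns]
    have hmx : ∀ x, nsite C x - (r:ℝ)/2 = m x := fun x => rfl
    simp only [hmx]
    rw [Finset.sum_congr rfl fun x _ =>
      (by ring : ((m x)^2 - (r:ℝ)/4)/2 = (m x)^2/2 - (r:ℝ)/8)]
    rw [Finset.sum_sub_distrib, ← Finset.sum_div, Finset.sum_const, Finset.card_univ,
      nsmul_eq_mul]
    rw [show ∑ x, (m x)^2 = ∑ x, (u x)^2 from Finset.sum_congr rfl fun x _ => (hu2 x).symm]
    ring
  have hmx : ∀ x, nsite C x - (r:ℝ)/2 = m x := fun x => rfl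
  unfold H0
  simp only [hmx]
  rw [hfirst, hQ]
  have humx : ∀ x, eps x * m x = u x := fun x => rfl
  simp only [hmx, humx]
  ring

end Statement11Aux

set_option maxHeartbeats 4000000 in
open Statement11Aux in
/-- **Theorem 2(i), matrix form.** For `t ≠ 0`, `U ≠ 0`, `W > 0`,
`4I < zW`, the energy `E(C) = −(1/2) Σ_σ Tr √((T + U S_σ(C))²) + H_i^0(C)` attains its
minimum at exactly the two full checkerboard configurations. -/
theorem statement11
    {V : Type*} [Fintype V] [DecidableEq V]
    (G : SimpleGraph V) [DecidableRel G.Adj]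
    (z r : ℕ) (hz : 2 ≤ z) (hr : 2 ≤ r)
    (hreg : G.IsRegularOfDegree z) (hconn : G.Connected)
    (Λe Λo : Finset V)
    (hcover : ∀ v : V, v ∈ Λe ∨ v ∈ Λo) (hdisj : Disjoint Λe Λo)
    (hbip : ∀ x y : V, G.Adj x y → (x ∈ Λe ∧ y ∈ Λo) ∨ (x ∈ Λo ∧ y ∈ Λe))
    (t U I W : ℝ) (ht : t ≠ 0) (hU : U ≠ 0) (hW : 0 < W) (hIW : 4 * I < (z : ℝ) * W) :
    {C : V → Fin r → Bool |
        ∀ C' : V → Fin r → Bool, Efun G r t U I W C ≤ Efun G r t U I W C'} =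
      {fun x _ => decide (x ∈ Λe), fun x _ => decide (x ∈ Λo)} ∧
    (fun (x : V) (_ : Fin r) => decide (x ∈ Λe)) ≠
      (fun (x : V) (_ : Fin r) => decide (x ∈ Λo)) := by
    classical
  have hrpos : 0 < r := by omega
  set T := hopMat G t with hTdef
  set eps : V → ℝ := fun x => if x ∈ Λe then 1 else -1 with hepsdef
  have heps2 : ∀ x, eps x * eps x = 1 := by
    intro x; by_cases h : x ∈ Λe <;> simp [hepsdef, h]
  have hmem : ∀ x, x ∈ Λe ↔ x ∉ Λo := by
    intro x
    constructor
    · exact fun h => Finset.disjoint_left.mp hdisj h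
    · intro h
      rcases hcover x with h' | h'
      · exact h'
      · exact absurd h' h
  have hepsadj : ∀ x y, G.Adj x y → eps x * eps y = -1 := by
    intro x y hxy
    rcases hbip x y hxy with ⟨h1, h2⟩ | ⟨h1, h2⟩
    · have h3 : y ∉ Λe := fun hy => Finset.disjoint_left.mp hdisj hy h2
      simp [hepsdef, h1, h3]
    · have h3 : x ∉ Λe := fun hx => Finset.disjoint_left.mp hdisj hx h1
      simp [hepsdef, h3, h2]
  have hepsadd : ∀ x y, G.Adj x y → eps x + eps y = 0 := by
    intro x y hxy
    rcases hbip x y hxy with ⟨h1, h2⟩ | ⟨h1, h2⟩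
    · have h3 : y ∉ Λe := fun hy => Finset.disjoint_left.mp hdisj hy h2
      simp [hepsdef, h1, h3]
    · have h3 : x ∉ Λe := fun hx => Finset.disjoint_left.mp hdisj hx h1
      simp [hepsdef, h3, h2]
  -- Hermitian facts
  have hTh : T.IsHermitian := by
    show T.conjTranspose = T
    ext x y
    simp only [hTdef, hopMat, Matrix.conjTranspose_apply, Matrix.of_apply, star_trivial]
    exact if_congr (G.adj_comm y x) rfl rfl
  have hermA : ∀ d : V → ℝ, (T + U • Matrix.diagonal d).IsHermitian := by
    intro d
    rw [← Matrix.diagonal_smul]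
    exact hTh.add (Matrix.isHermitian_diagonal _)
  have hermB : ∀ d : V → ℝ, (-T + U • Matrix.diagonal d).IsHermitian := by
    intro d
    rw [← Matrix.diagonal_smul]
    exact hTh.neg.add (Matrix.isHermitian_diagonal _)
  have hTneg : ∀ x y, eps x * T x y * eps y = -T x y := by
    intro x y
    by_cases h : G.Adj x y
    · have h1 := hepsadj x y h
      simp only [hTdef, hopMat, Matrix.of_apply, if_pos h]
      linear_combination t * h1
    · simp [hTdef, hopMat, h]
  have hTES : T * Matrix.diagonal eps + Matrix.diagonal eps * T = 0 := by
    apply anticomm_T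
    intro x y
    by_cases h : G.Adj x y
    · rw [hepsadd x y h, mul_zero]
    · simp [hTdef, hopMat, h]
  have hEE : Matrix.diagonal eps * Matrix.diagonal eps = 1 := diag_sq_one eps heps2
  set Ce : V → Fin r → Bool := fun x _ => decide (x ∈ Λe) with hCe
  set Co : V → Fin r → Bool := fun x _ => decide (x ∈ Λo) with hCo
  set K := trAbs (T + U • Matrix.diagonal eps) with hK
  -- electron bound
  have hbound : ∀ (C : V → Fin r → Bool) (σ : Fin r), trAbs (T + U • ionMat C σ) ≤ K := by
    intro C σ
    set s : V → ℝ := fun x => 2 * occ (C x σ) - 1 with hs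
    have hion : ionMat C σ = Matrix.diagonal s := rfl
    have hs2 : ∀ x, s x * s x = 1 := by
      intro x
      simp only [hs]
      cases h : C x σ <;> simp [occ, h] <;> norm_num
    have hA : (T + U • Matrix.diagonal s).IsHermitian := hermA s
    have hB : (-T + U • Matrix.diagonal s).IsHermitian := hermB s
    have hC0 : (T + U • Matrix.diagonal eps).IsHermitian := hermA eps
    have hBconj : Matrix.diagonal eps * (T + U • Matrix.diagonal s) * Matrix.diagonal eps
        = -T + U • Matrix.diagonal s := by
      rw [Matrix.mul_add, Matrix.add_mul, mul_smul_comm, smul_mul_assoc,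
        conj_eps_T T eps hTneg, conj_eps_diag eps s heps2]
    have hAA : ((T + U • Matrix.diagonal s) * (T + U • Matrix.diagonal s)).PosSemidef :=
      psd_of_herm hA
    have htr : trAbs (-T + U • Matrix.diagonal s) = trAbs (T + U • Matrix.diagonal s) := by
      rw [← hBconj, trAbs_conj hAA eps heps2]
    have hk := key hA hB hC0 (sum_sq_eq T (Matrix.diagonal s) (Matrix.diagonal eps) U
      (diag_sq_one s hs2) hEE hTES)
    rw [hion]
    linarith
  -- checkerboard ion matrices
  have hCeIon : ∀ σ : Fin r, ionMat Ce σ = Matrix.diagonal eps := by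
    intro σ
    unfold ionMat
    have hfn : (fun x => 2 * occ (Ce x σ) - 1) = eps := by
      funext x
      by_cases h : x ∈ Λe <;> simp [hCe, h, occ, hepsdef] <;> norm_num
    rw [hfn]
  have hCoIon : ∀ σ : Fin r, ionMat Co σ = Matrix.diagonal (fun x => -eps x) := by
    intro σ
    unfold ionMat
    have hfn : (fun x => 2 * occ (Co x σ) - 1) = (fun x => -eps x) := by
      funext x
      by_cases h : x ∈ Λe
      · have h2 : x ∉ Λo := (hmem x).mp h
        simp [hCo, h2, occ, hepsdef, h]
        try norm_num
      · have h2 : x ∈ Λo := by rcases hcover x with h' | h'; exact absurd h' h; exact h'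
        simp [hCo, h2, occ, hepsdef, h]
        try norm_num
    rw [hfn]
  have hCoTr : trAbs (T + U • Matrix.diagonal (fun x => -eps x)) = K := by
    rw [hK]
    apply trAbs_congr_sq
    have hde : Matrix.diagonal (fun x => -eps x) = -(Matrix.diagonal eps) := by
      rw [← Matrix.diagonal_neg]
    rw [hde, smul_neg, ← neg_smul]
    rw [sq_expand T (Matrix.diagonal eps) hEE (-U), sq_expand T (Matrix.diagonal eps) hEE U,
      hTES, smul_zero, smul_zero, neg_mul_neg]
  -- H0 analysis
  set mfun : (V → Fin r → Bool) → V → ℝ := fun C x => nsite C x - (r:ℝ)/2 with hmfun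
  set ufun : (V → Fin r → Bool) → V → ℝ := fun C x => eps x * mfun C x with hufun
  have hH0eq : ∀ C : V → Fin r → Bool, H0 G r I W C
      = (I - z*W/4) * (∑ x, (ufun C x)^2)
        + W/8 * (∑ x, ∑ y, if G.Adj x y then (ufun C x - ufun C y)^2 else 0)
        - I * r * (Fintype.card V) / 4 :=
    fun C => H0_eq G z r hreg eps heps2 hepsadj I W C
  set cc : ℝ := I - z*W/4 with hcc
  have hcneg : cc < 0 := by
    rw [hcc]
    have : (0:ℝ) < z * W := by positivity
    linarith
  set NN : ℝ := (Fintype.card V : ℝ) with hNN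
  have husq_le : ∀ (C : V → Fin r → Bool) x, (ufun C x)^2 ≤ ((r:ℝ)/2)^2 := by
    intro C x
    have h1 : (ufun C x)^2 = (mfun C x)^2 := by
      simp only [hufun]
      linear_combination (mfun C x)^2 * heps2 x
    rw [h1]
    have h2 := nsite_nonneg C x
    have h3 := nsite_le C x
    simp only [hmfun]
    nlinarith
  have hSum_le : ∀ C : V → Fin r → Bool, ∑ x, (ufun C x)^2 ≤ NN * ((r:ℝ)/2)^2 := by
    intro C
    calc ∑ x, (ufun C x)^2 ≤ ∑ _x : V, ((r:ℝ)/2)^2 :=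
          Finset.sum_le_sum fun x _ => husq_le C x
      _ = NN * ((r:ℝ)/2)^2 := by
          rw [Finset.sum_const, Finset.card_univ, nsmul_eq_mul, hNN]
  have hQ0 : ∀ C : V → Fin r → Bool,
      0 ≤ ∑ x, ∑ y, (if G.Adj x y then (ufun C x - ufun C y)^2 else 0) := by
    intro C
    apply Finset.sum_nonneg
    intro x _
    apply Finset.sum_nonneg
    intro y _
    by_cases h : G.Adj x y
    · rw [if_pos h]; exact sq_nonneg _
    · rw [if_neg h]
  set H0min : ℝ := cc * (NN * ((r:ℝ)/2)^2) - I * r * NN / 4 with hH0min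
  have hH0low : ∀ C : V → Fin r → Bool, H0min ≤ H0 G r I W C := by
    intro C
    rw [hH0eq C]
    have h1 : cc * (∑ x, (ufun C x)^2) ≥ cc * (NN * ((r:ℝ)/2)^2) := by
      apply mul_le_mul_of_nonpos_left (hSum_le C) hcneg.le
    have h2 := hQ0 C
    rw [hH0min]
    have h3 : 0 ≤ W/8 * (∑ x, ∑ y, (if G.Adj x y then (ufun C x - ufun C y)^2 else 0)) := by
      apply mul_nonneg (by linarith) h2
    linarith
  -- equality case
  have hH0case : ∀ C : V → Fin r → Bool, H0 G r I W C ≤ H0min →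
      (∀ x, (ufun C x)^2 = ((r:ℝ)/2)^2) ∧ (∀ x y, G.Adj x y → ufun C x = ufun C y) := by
    intro C hle
    rw [hH0eq C, hH0min] at hle
    have h1 : cc * (∑ x, (ufun C x)^2) ≥ cc * (NN * ((r:ℝ)/2)^2) :=
      mul_le_mul_of_nonpos_left (hSum_le C) hcneg.le
    have hq := hQ0 C
    have hWQ : W/8 * (∑ x, ∑ y, (if G.Adj x y then (ufun C x - ufun C y)^2 else 0)) ≤ 0 := by
      linarith
    have hQzero : ∑ x, ∑ y, (if G.Adj x y then (ufun C x - ufun C y)^2 else 0) = 0 := by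
      nlinarith
    have hSeq : ∑ x, (ufun C x)^2 = NN * ((r:ℝ)/2)^2 := by
      rw [hQzero, mul_zero] at hle
      have h2 : cc * (∑ x, (ufun C x)^2) ≤ cc * (NN * ((r:ℝ)/2)^2) := by linarith
      have h3 : NN * ((r:ℝ)/2)^2 ≤ ∑ x, (ufun C x)^2 := by
        by_contra hcon
        push_neg at hcon
        nlinarith
      linarith [hSum_le C]
    constructor
    · intro x
      by_contra hne
      have hlt : (ufun C x)^2 < ((r:ℝ)/2)^2 := lt_of_le_of_ne (husq_le C x) hne
      have h4 : ∑ x, (ufun C x)^2 < ∑ _x : V, ((r:ℝ)/2)^2 :=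
        Finset.sum_lt_sum (fun i _ => husq_le C i) ⟨x, Finset.mem_univ _, hlt⟩
      rw [Finset.sum_const, Finset.card_univ, nsmul_eq_mul, ← hNN] at h4
      linarith
    · intro x y hxy
      have hinner : ∀ x ∈ Finset.univ,
          0 ≤ ∑ y, (if G.Adj x y then (ufun C x - ufun C y)^2 else 0) := by
        intro x _
        apply Finset.sum_nonneg
        intro y _
        by_cases h : G.Adj x y
        · rw [if_pos h]; exact sq_nonneg _
        · rw [if_neg h]
      have h5 := (Finset.sum_eq_zero_iff_of_nonneg hinner).mp hQzero x (Finset.mem_univ _)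
      have hinner2 : ∀ y ∈ Finset.univ,
          (0:ℝ) ≤ (if G.Adj x y then (ufun C x - ufun C y)^2 else 0) := by
        intro y _
        by_cases h : G.Adj x y
        · rw [if_pos h]; exact sq_nonneg _
        · rw [if_neg h]
      have h6 := (Finset.sum_eq_zero_iff_of_nonneg hinner2).mp h5 y (Finset.mem_univ _)
      rw [if_pos hxy] at h6
      exact sub_eq_zero.mp (sq_eq_zero_iff.mp h6)
  have hconst : ∀ C : V → Fin r → Bool, (∀ x y, G.Adj x y → ufun C x = ufun C y) →
      ∀ x y, ufun C x = ufun C y := by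
    intro C h x y
    obtain ⟨w⟩ := hconn.preconnected x y
    exact walk_const G (ufun C) h w
  -- determine configurations from equality
  have hdetermine : ∀ C : V → Fin r → Bool, H0 G r I W C ≤ H0min → C = Ce ∨ C = Co := by
    intro C hle
    obtain ⟨hsq, hadj⟩ := hH0case C hle
    have hcst := hconst C hadj
    obtain ⟨x0⟩ := hconn.nonempty
    have hx0 : ufun C x0 = (r:ℝ)/2 ∨ ufun C x0 = -((r:ℝ)/2) := by
      have h1 : (ufun C x0 - (r:ℝ)/2) * (ufun C x0 + (r:ℝ)/2) = 0 := by
        linear_combination hsq x0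
      rcases mul_eq_zero.mp h1 with h | h
      · left; linarith
      · right; linarith
    have hval : ∀ x, ufun C x = ufun C x0 := fun x => hcst x x0
    rcases hx0 with h | h
    · left
      funext x σ
      have hux : ufun C x = (r:ℝ)/2 := by rw [hval x, h]
      by_cases hx : x ∈ Λe
      · have he : eps x = 1 := by simp [hepsdef, hx]
        have hns : nsite C x = r := by
          have : eps x * (nsite C x - (r:ℝ)/2) = (r:ℝ)/2 := hux
          rw [he, one_mul] at this
          linarith
        rw [all_true_of_nsite_eq C x hns σ]
        simp [hCe, hx]
      · have he : eps x = -1 := by simp [hepsdef, hx]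
        have hns : nsite C x = 0 := by
          have : eps x * (nsite C x - (r:ℝ)/2) = (r:ℝ)/2 := hux
          rw [he] at this
          linarith
        rw [all_false_of_nsite_eq C x hns σ]
        simp [hCe, hx]
    · right
      funext x σ
      have hux : ufun C x = -((r:ℝ)/2) := by rw [hval x, h]
      by_cases hx : x ∈ Λe
      · have he : eps x = 1 := by simp [hepsdef, hx]
        have hns : nsite C x = 0 := by
          have : eps x * (nsite C x - (r:ℝ)/2) = -((r:ℝ)/2) := hux
          rw [he, one_mul] at this
          linarith
        rw [all_false_of_nsite_eq C x hns σ]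
        have h2 : x ∉ Λo := (hmem x).mp hx
        simp [hCo, h2]
      · have he : eps x = -1 := by simp [hepsdef, hx]
        have hns : nsite C x = r := by
          have : eps x * (nsite C x - (r:ℝ)/2) = -((r:ℝ)/2) := hux
          rw [he] at this
          linarith
        rw [all_true_of_nsite_eq C x hns σ]
        have h2 : x ∈ Λo := by rcases hcover x with h' | h'; exact absurd h' hx; exact h'
        simp [hCo, h2]
  -- values at checkerboards
  have hnsCe : ∀ x, nsite Ce x = if x ∈ Λe then (r:ℝ) else 0 := by
    intro x
    unfold nsite
    by_cases h : x ∈ Λe <;> simp [hCe, h, occ]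
  have hnsCo : ∀ x, nsite Co x = if x ∈ Λo then (r:ℝ) else 0 := by
    intro x
    unfold nsite
    by_cases h : x ∈ Λo <;> simp [hCo, h, occ]
  have huCe : ∀ x, ufun Ce x = (r:ℝ)/2 := by
    intro x
    simp only [hufun, hmfun]
    by_cases h : x ∈ Λe
    · rw [hnsCe x, if_pos h]
      simp [hepsdef, h]
      try ring
    · rw [hnsCe x, if_neg h]
      simp [hepsdef, h]
      try ring
  have huCo : ∀ x, ufun Co x = -((r:ℝ)/2) := by
    intro x
    simp only [hufun, hmfun]
    by_cases h : x ∈ Λe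
    · have h2 : x ∉ Λo := (hmem x).mp h
      rw [hnsCo x, if_neg h2]
      simp [hepsdef, h]
      try ring
    · have h2 : x ∈ Λo := by rcases hcover x with h' | h'; exact absurd h' h; exact h'
      rw [hnsCo x, if_pos h2]
      simp [hepsdef, h]
      try ring
  have hH0Ck : ∀ (C : V → Fin r → Bool) (a : ℝ), (∀ x, ufun C x = a) → a^2 = ((r:ℝ)/2)^2 →
      H0 G r I W C = H0min := by
    intro C a hva hsq
    rw [hH0eq C, hH0min]
    have h1 : ∑ x, (ufun C x)^2 = NN * ((r:ℝ)/2)^2 := by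
      rw [Finset.sum_congr rfl fun x _ => by rw [hva x, hsq]]
      rw [Finset.sum_const, Finset.card_univ, nsmul_eq_mul, hNN]
    have h2 : ∑ x, ∑ y, (if G.Adj x y then (ufun C x - ufun C y)^2 else 0) = 0 := by
      apply Finset.sum_eq_zero
      intro x _
      apply Finset.sum_eq_zero
      intro y _
      rw [hva x, hva y]
      simp
    rw [h1, h2]
    ring
  have hH0Ce : H0 G r I W Ce = H0min := hH0Ck Ce ((r:ℝ)/2) huCe rfl
  have hH0Co : H0 G r I W Co = H0min := hH0Ck Co (-((r:ℝ)/2)) huCo (by ring)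
  -- electron sums at checkerboards
  have hsumCe : ∑ σ : Fin r, trAbs (T + U • ionMat Ce σ) = r * K := by
    rw [Finset.sum_congr rfl fun σ _ => by rw [hCeIon σ, ← hK]]
    rw [Finset.sum_const, Finset.card_univ, Fintype.card_fin, nsmul_eq_mul]
  have hsumCo : ∑ σ : Fin r, trAbs (T + U • ionMat Co σ) = r * K := by
    rw [Finset.sum_congr rfl fun σ _ => by rw [hCoIon σ, hCoTr]]
    rw [Finset.sum_const, Finset.card_univ, Fintype.card_fin, nsmul_eq_mul]
  -- energy bounds
  set Emin : ℝ := -(1/2) * (r * K) + H0min with hEmin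
  have hsum_le : ∀ C : V → Fin r → Bool,
      ∑ σ : Fin r, trAbs (T + U • ionMat C σ) ≤ r * K := by
    intro C
    calc ∑ σ : Fin r, trAbs (T + U • ionMat C σ) ≤ ∑ _σ : Fin r, K :=
          Finset.sum_le_sum fun σ _ => hbound C σ
      _ = r * K := by rw [Finset.sum_const, Finset.card_univ, Fintype.card_fin, nsmul_eq_mul]
  have hElow2 : ∀ C : V → Fin r → Bool,
      -(1/2) * (r * K) + H0 G r I W C ≤ Efun G r t U I W C := by
    intro C
    unfold Efun
    have h1 := hsum_le C
    have h2 : -(1/2) * (r * K) ≤ -(1/2) * ∑ σ : Fin r, trAbs (hopMat G t + U • ionMat C σ) := by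
      rw [← hTdef]
      linarith
    linarith
  have hElow : ∀ C : V → Fin r → Bool, Emin ≤ Efun G r t U I W C := by
    intro C
    calc Emin = -(1/2) * ((r:ℝ) * K) + H0min := hEmin
      _ ≤ -(1/2) * ((r:ℝ) * K) + H0 G r I W C := add_le_add_right (hH0low C) _
      _ ≤ Efun G r t U I W C := hElow2 C
  have hECe : Efun G r t U I W Ce = Emin := by
    unfold Efun
    rw [← hTdef, hsumCe, hH0Ce, hEmin]
  have hECo : Efun G r t U I W Co = Emin := by
    unfold Efun
    rw [← hTdef, hsumCo, hH0Co, hEmin]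
  constructor
  · ext C
    simp only [Set.mem_setOf_eq, Set.mem_insert_iff, Set.mem_singleton_iff]
    constructor
    · intro hmin
      have h1 : Efun G r t U I W C ≤ Emin := by
        rw [← hECe]
        exact hmin Ce
      have h2 := hElow2 C
      have h3 : H0 G r I W C ≤ H0min := by
        rw [hEmin] at h1
        have h4 := le_trans h2 h1
        exact (add_le_add_iff_left _).mp h4
      rcases hdetermine C h3 with h | h
      · left; rw [h, hCe]
      · right; rw [h, hCo]
    · rintro (rfl | rfl)
      · intro C'
        rw [hECe]
        exact hElow C'
      · intro C'
        rw [hECo]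
        exact hElow C'
  · intro hEq
    obtain ⟨v⟩ := hconn.nonempty
    have h1 := congrFun (congrFun hEq v) ⟨0, hrpos⟩
    by_cases hv : v ∈ Λe
    · have h2 : v ∉ Λo := (hmem v).mp hv
      simp [hCe, hCo, hv, h2] at h1
    · have h2 : v ∈ Λo := by rcases hcover v with h' | h'; exact absurd h' hv; exact h'
      simp [hCe, hCo, hv, h2] at h1
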